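/- Let 1 ≤ p₁ ≤ p₂ < ∞, let φ₁ ∈ G_{p₁} and φ₂ ∈ G_{p₂}. If wℓ^{p₂}_{φ₂} ⊆ wℓ^{p₁}_{φ₁} (i.e., every sequence x with ‖x‖_{wℓ^{p₂}_{φ₂}} < ∞ satisfies ‖x‖_{wℓ^{p₁}_{φ₁}} < ∞), then there exists C > 0 such that ‖x‖_{wℓ^{p₁}_{φ₁}} ≤ C ‖x‖_{wℓ^{p₂}_{φ₂}} for every x ∈ wℓ^{p₂}_{φ₂}. -/

import Mathlib

open scoped ENNReal NNReal BigOperators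

/-- The discrete "ball" `S_{m,N} = {m-N, …, m+N}` as a finite set of integers. -/
noncomputable def S (m : ℤ) (N : ℕ) : Finset ℤ := Finset.Icc (m - N) (m + N)

open Classical in
/-- The cardinality of `{k ∈ S_{m,N} : |x_k| > γ}`. -/
noncomputable def weakCard (x : ℤ → ℂ) (m : ℤ) (N : ℕ) (γ : ℝ≥0) : ℕ :=
  ((S m N).filter (fun k => γ < ‖x k‖₊)).card

/-- The generalized weak type discrete Morrey norm `‖x‖_{wℓ^p_φ}`. -/
noncomputable def wgMorreyNorm (p : ℝ) (φ : ℕ → ℝ) (x : ℤ → ℂ) : ℝ≥0∞ :=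
  ⨆ (m : ℤ) (N : ℕ) (γ : ℝ≥0) (_ : 0 < γ),
    (ENNReal.ofReal (φ (2 * N + 1)))⁻¹ * (γ : ℝ≥0∞) *
      ((weakCard x m N γ : ℝ≥0∞) / (2 * (N : ℝ≥0∞) + 1)) ^ (1 / p)

/-- One term of the supremum defining the norm. -/
noncomputable def wTerm (p : ℝ) (φ : ℕ → ℝ) (x : ℤ → ℂ) (m : ℤ) (N : ℕ) (γ : ℝ≥0) : ℝ≥0∞ :=
  (ENNReal.ofReal (φ (2 * N + 1)))⁻¹ * (γ : ℝ≥0∞) *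
    ((weakCard x m N γ : ℝ≥0∞) / (2 * (N : ℝ≥0∞) + 1)) ^ (1 / p)

lemma wTerm_le_norm (p : ℝ) (φ : ℕ → ℝ) (x : ℤ → ℂ) (m : ℤ) (N : ℕ) {γ : ℝ≥0} (hγ : 0 < γ) :
    wTerm p φ x m N γ ≤ wgMorreyNorm p φ x :=
  le_iSup_of_le m <| le_iSup_of_le N <| le_iSup_of_le γ <| le_iSup_of_le hγ le_rfl

lemma norm_le_of (p : ℝ) (φ : ℕ → ℝ) (x : ℤ → ℂ) {B : ℝ≥0∞}
    (h : ∀ m N γ, 0 < γ → wTerm p φ x m N γ ≤ B) : wgMorreyNorm p φ x ≤ B :=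
  iSup_le fun m => iSup_le fun N => iSup_le fun γ => iSup_le fun hγ => h m N γ hγ

lemma card_S (m : ℤ) (N : ℕ) : (S m N).card = 2 * N + 1 := by
  rw [S, Int.card_Icc]; omega

lemma weakCard_le (x : ℤ → ℂ) (m : ℤ) (N : ℕ) (γ : ℝ≥0) : weakCard x m N γ ≤ 2 * N + 1 := by
  classical
  exact (Finset.card_filter_le _ _).trans_eq (card_S m N)

lemma twoN1 (N : ℕ) : (2 * (N : ℝ≥0∞) + 1) = ((2 * N + 1 : ℕ) : ℝ≥0∞) := by push_cast; ring

lemma twoN1_ne_zero (N : ℕ) : (2 * (N : ℝ≥0∞) + 1) ≠ 0 := by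
  rw [twoN1]; exact Nat.cast_ne_zero.2 (by omega)

lemma twoN1_ne_top (N : ℕ) : (2 * (N : ℝ≥0∞) + 1) ≠ ⊤ := by
  rw [twoN1]; exact ENNReal.natCast_ne_top _

lemma ratio_le_one {c : ℕ} (N : ℕ) (h : c ≤ 2 * N + 1) :
    ((c : ℝ≥0∞) / (2 * (N : ℝ≥0∞) + 1)) ≤ 1 := by
  apply ENNReal.div_le_of_le_mul
  rw [one_mul, twoN1]
  exact_mod_cast h

lemma sum_rpow_le {ι : Type*} (s : Finset ι) (f : ι → ℝ≥0∞) {r : ℝ} (hr0 : 0 < r) (hr1 : r ≤ 1) :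
    (∑ i ∈ s, f i) ^ r ≤ ∑ i ∈ s, (f i) ^ r := by
  classical
  induction s using Finset.cons_induction with
  | empty => simp [ENNReal.zero_rpow_of_pos hr0]
  | cons a s ha ih =>
      rw [Finset.sum_cons, Finset.sum_cons]
      exact (ENNReal.rpow_add_le_add_rpow _ _ hr0.le hr1).trans (by gcongr)

/-- The single-block estimate. -/
lemma block {p : ℝ} (hp : 1 ≤ p) {φ : ℕ → ℝ} (hφ : ∀ N, 0 < φ (2 * N + 1))
    {Cd Ci : ℝ} (hCd : 0 < Cd) (hCi : 0 < Ci)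
    (hdec : ∀ M N : ℕ, M ≤ N → Cd * φ (2 * N + 1) ≤ φ (2 * M + 1))
    (hinc : ∀ M N : ℕ, M ≤ N →
      (2 * (M : ℝ) + 1) ^ (1 / p) * φ (2 * M + 1) ≤
        Ci * ((2 * (N : ℝ) + 1) ^ (1 / p) * φ (2 * N + 1)))
    (N₀ N : ℕ) {γ a : ℝ≥0} (hγa : γ ≤ a) {c : ℕ} (h1 : c ≤ 2 * N + 1) (h2 : c ≤ 2 * N₀ + 1) :
    (ENNReal.ofReal (φ (2 * N + 1)))⁻¹ * γ * ((c : ℝ≥0∞) / (2 * (N : ℝ≥0∞) + 1)) ^ (1 / p)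
      ≤ ENNReal.ofReal (Cd⁻¹ + Ci) * a * (ENNReal.ofReal (φ (2 * N₀ + 1)))⁻¹ := by
  have hp0 : 0 < p := lt_of_lt_of_le zero_lt_one hp
  have hr0 : (0:ℝ) < 1 / p := by positivity
  have key : (ENNReal.ofReal (φ (2 * N + 1)))⁻¹ * ((c : ℝ≥0∞) / (2 * (N : ℝ≥0∞) + 1)) ^ (1 / p)
      ≤ ENNReal.ofReal (Cd⁻¹ + Ci) * (ENNReal.ofReal (φ (2 * N₀ + 1)))⁻¹ := by
    rcases le_total N N₀ with hN | hN
    · -- small N : use almost decreasing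
      have hq : ((c : ℝ≥0∞) / (2 * (N : ℝ≥0∞) + 1)) ^ (1 / p) ≤ 1 :=
        ENNReal.rpow_le_one (ratio_le_one N h1) hr0.le
      calc (ENNReal.ofReal (φ (2 * N + 1)))⁻¹ * ((c : ℝ≥0∞) / (2 * (N : ℝ≥0∞) + 1)) ^ (1 / p)
          ≤ (ENNReal.ofReal (φ (2 * N + 1)))⁻¹ * 1 := mul_le_mul_right hq _
        _ = (ENNReal.ofReal (φ (2 * N + 1)))⁻¹ := mul_one _
        _ ≤ (ENNReal.ofReal (Cd * φ (2 * N₀ + 1)))⁻¹ :=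
            ENNReal.inv_le_inv' (ENNReal.ofReal_le_ofReal (hdec N N₀ hN))
        _ = ENNReal.ofReal Cd⁻¹ * (ENNReal.ofReal (φ (2 * N₀ + 1)))⁻¹ := by
            rw [ENNReal.ofReal_mul hCd.le,
              ENNReal.mul_inv (Or.inl (by simp [hCd])) (Or.inl ENNReal.ofReal_ne_top),
              ENNReal.ofReal_inv_of_pos hCd]
        _ ≤ ENNReal.ofReal (Cd⁻¹ + Ci) * (ENNReal.ofReal (φ (2 * N₀ + 1)))⁻¹ :=
            mul_le_mul_left (ENNReal.ofReal_le_ofReal (by linarith)) _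
    · -- big N : use almost increasing
      have h2' : (c : ℝ≥0∞) ≤ ((2 * N₀ + 1 : ℕ) : ℝ≥0∞) := by exact_mod_cast h2
      have hq : ((c : ℝ≥0∞) / (2 * (N : ℝ≥0∞) + 1)) ^ (1 / p)
          ≤ (((2 * N₀ + 1 : ℕ) : ℝ≥0∞) / (2 * (N : ℝ≥0∞) + 1)) ^ (1 / p) := by
        gcongr
      have hNpos : (0:ℝ) < 2 * (N:ℝ) + 1 := by positivity
      have hN0pos : (0:ℝ) < 2 * (N₀:ℝ) + 1 := by positivity
      have hcast1 : ((2 * N₀ + 1 : ℕ) : ℝ≥0∞) = ENNReal.ofReal (2 * (N₀:ℝ) + 1) := by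
        rw [show (2 * (N₀:ℝ) + 1) = ((2 * N₀ + 1 : ℕ) : ℝ) by push_cast; ring,
          ENNReal.ofReal_natCast]
      have hcast2 : (2 * (N : ℝ≥0∞) + 1) = ENNReal.ofReal (2 * (N:ℝ) + 1) := by
        rw [twoN1, show (2 * (N:ℝ) + 1) = ((2 * N + 1 : ℕ) : ℝ) by push_cast; ring,
          ENNReal.ofReal_natCast]
      have heq : (ENNReal.ofReal (φ (2 * N + 1)))⁻¹ *
          (((2 * N₀ + 1 : ℕ) : ℝ≥0∞) / (2 * (N : ℝ≥0∞) + 1)) ^ (1 / p)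
          = ENNReal.ofReal ((φ (2 * N + 1))⁻¹ * ((2 * (N₀:ℝ) + 1) / (2 * (N:ℝ) + 1)) ^ (1 / p)) := by
        rw [hcast1, hcast2, ← ENNReal.ofReal_div_of_pos hNpos,
          ENNReal.ofReal_rpow_of_pos (by positivity),
          ENNReal.ofReal_mul (inv_nonneg.2 (hφ N).le), ENNReal.ofReal_inv_of_pos (hφ N)]
      have hreal : (φ (2 * N + 1))⁻¹ * ((2 * (N₀:ℝ) + 1) / (2 * (N:ℝ) + 1)) ^ (1 / p)
          ≤ Ci * (φ (2 * N₀ + 1))⁻¹ := by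
        have h := hinc N₀ N hN
        have ht0 : (0:ℝ) < (2 * (N₀:ℝ) + 1) ^ (1 / p) := Real.rpow_pos_of_pos hN0pos _
        have ht : (0:ℝ) < (2 * (N:ℝ) + 1) ^ (1 / p) := Real.rpow_pos_of_pos hNpos _
        rw [Real.div_rpow hN0pos.le hNpos.le, inv_mul_eq_div, div_div,
          ← div_eq_mul_inv, div_le_div_iff₀ (mul_pos ht (hφ N)) (hφ N₀)]
        nlinarith [hφ N, hφ N₀, h]
      calc (ENNReal.ofReal (φ (2 * N + 1)))⁻¹ * ((c : ℝ≥0∞) / (2 * (N : ℝ≥0∞) + 1)) ^ (1 / p)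
          ≤ (ENNReal.ofReal (φ (2 * N + 1)))⁻¹ *
              (((2 * N₀ + 1 : ℕ) : ℝ≥0∞) / (2 * (N : ℝ≥0∞) + 1)) ^ (1 / p) :=
            mul_le_mul_right hq _
        _ = ENNReal.ofReal ((φ (2 * N + 1))⁻¹ *
              ((2 * (N₀:ℝ) + 1) / (2 * (N:ℝ) + 1)) ^ (1 / p)) := heq
        _ ≤ ENNReal.ofReal (Ci * (φ (2 * N₀ + 1))⁻¹) := ENNReal.ofReal_le_ofReal hreal
        _ = ENNReal.ofReal Ci * (ENNReal.ofReal (φ (2 * N₀ + 1)))⁻¹ := by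
            rw [ENNReal.ofReal_mul hCi.le, ENNReal.ofReal_inv_of_pos (hφ N₀)]
        _ ≤ ENNReal.ofReal (Cd⁻¹ + Ci) * (ENNReal.ofReal (φ (2 * N₀ + 1)))⁻¹ :=
            mul_le_mul_left (ENNReal.ofReal_le_ofReal (by nlinarith [inv_pos.2 hCd])) _
  calc (ENNReal.ofReal (φ (2 * N + 1)))⁻¹ * γ * ((c : ℝ≥0∞) / (2 * (N : ℝ≥0∞) + 1)) ^ (1 / p)
      ≤ (ENNReal.ofReal (φ (2 * N + 1)))⁻¹ * a * ((c : ℝ≥0∞) / (2 * (N : ℝ≥0∞) + 1)) ^ (1 / p) :=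
        mul_le_mul_left (mul_le_mul_right (ENNReal.coe_le_coe.2 hγa) _) _
    _ = ((ENNReal.ofReal (φ (2 * N + 1)))⁻¹ * ((c : ℝ≥0∞) / (2 * (N : ℝ≥0∞) + 1)) ^ (1 / p)) * a := by
        ring
    _ ≤ (ENNReal.ofReal (Cd⁻¹ + Ci) * (ENNReal.ofReal (φ (2 * N₀ + 1)))⁻¹) * a :=
        mul_le_mul_left key _
    _ = ENNReal.ofReal (Cd⁻¹ + Ci) * a * (ENNReal.ofReal (φ (2 * N₀ + 1)))⁻¹ := by ring

theorem stmt19 (p₁ p₂ : ℝ) (hp₁ : 1 ≤ p₁) (hp : p₁ ≤ p₂)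
    (φ₁ φ₂ : ℕ → ℝ)
    (hφ₁pos : ∀ N : ℕ, 0 < φ₁ (2 * N + 1)) (hφ₂pos : ∀ N : ℕ, 0 < φ₂ (2 * N + 1))
    (hdec₁ : ∃ C : ℝ, 0 < C ∧ ∀ M N : ℕ, M ≤ N → C * φ₁ (2 * N + 1) ≤ φ₁ (2 * M + 1))
    (hinc₁ : ∃ C : ℝ, 0 < C ∧ ∀ M N : ℕ, M ≤ N →
      (2 * (M : ℝ) + 1) ^ (1 / p₁) * φ₁ (2 * M + 1) ≤
        C * ((2 * (N : ℝ) + 1) ^ (1 / p₁) * φ₁ (2 * N + 1)))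
    (hdec₂ : ∃ C : ℝ, 0 < C ∧ ∀ M N : ℕ, M ≤ N → C * φ₂ (2 * N + 1) ≤ φ₂ (2 * M + 1))
    (hinc₂ : ∃ C : ℝ, 0 < C ∧ ∀ M N : ℕ, M ≤ N →
      (2 * (M : ℝ) + 1) ^ (1 / p₂) * φ₂ (2 * M + 1) ≤
        C * ((2 * (N : ℝ) + 1) ^ (1 / p₂) * φ₂ (2 * N + 1)))
    (hsub : ∀ x : ℤ → ℂ, wgMorreyNorm p₂ φ₂ x < ⊤ → wgMorreyNorm p₁ φ₁ x < ⊤) :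
    ∃ C : ℝ, 0 < C ∧ ∀ x : ℤ → ℂ, wgMorreyNorm p₂ φ₂ x < ⊤ →
      wgMorreyNorm p₁ φ₁ x ≤ ENNReal.ofReal C * wgMorreyNorm p₂ φ₂ x := by
  classical
  obtain ⟨Cd, hCd, hdec⟩ := hdec₂
  obtain ⟨Ci, hCi, hinc⟩ := hinc₂
  have hp₁0 : 0 < p₁ := lt_of_lt_of_le zero_lt_one hp₁
  have hp₂1 : 1 ≤ p₂ := hp₁.trans hp
  have hp₂0 : 0 < p₂ := lt_of_lt_of_le zero_lt_one hp₂1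
  -- Step 1 : derive the comparison of the φ's from the inclusion
  have key : ∃ C' : ℝ, 0 < C' ∧ ∀ N, φ₂ (2 * N + 1) ≤ C' * φ₁ (2 * N + 1) := by
    by_contra hcon
    push_neg at hcon
    choose Nf hNf using fun j : ℕ => hcon ((4:ℝ)^j) (by positivity)
    set Pn : ℕ → ℕ := fun j => ∑ i ∈ Finset.range j, (2 * Nf i + 1) with hPn
    set msh : ℕ → ℤ := fun j => ((Pn j : ℤ) + (Nf j : ℤ)) with hmsh
    have hS : ∀ j, S (msh j) (Nf j) = Finset.Icc ((Pn j : ℤ)) ((Pn j : ℤ) + 2 * (Nf j : ℤ)) := by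
      intro j
      rw [S, hmsh]
      congr 1 <;> push_cast <;> ring
    have hPsucc : ∀ j, Pn (j + 1) = Pn j + (2 * Nf j + 1) := fun j => Finset.sum_range_succ _ j
    have hPmono : ∀ i j : ℕ, i ≤ j → Pn i ≤ Pn j := fun i j h =>
      Finset.sum_le_sum_of_subset (Finset.range_subset_range.2 h)
    have hjle : ∀ j, j ≤ Pn j := by
      intro j
      calc j = ∑ _i ∈ Finset.range j, 1 := by simp
        _ ≤ Pn j := Finset.sum_le_sum fun i _ => by omega
    have huniq : ∀ (i j : ℕ) (k : ℤ), k ∈ S (msh i) (Nf i) → k ∈ S (msh j) (Nf j) → i = j := by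
      intro i j k hi hj
      rw [hS, Finset.mem_Icc] at hi hj
      by_contra hne
      rcases Nat.lt_or_ge i j with h | h
      · have h1 : Pn i + (2 * Nf i + 1) ≤ Pn j := by rw [← hPsucc]; exact hPmono _ _ h
        omega
      · have h' : j < i := by omega
        have h1 : Pn j + (2 * Nf j + 1) ≤ Pn i := by rw [← hPsucc]; exact hPmono _ _ h'
        omega
    set a : ℕ → ℝ≥0 := fun j => (2 : ℝ≥0)⁻¹ ^ j * (φ₂ (2 * Nf j + 1)).toNNReal with ha
    have hapos : ∀ j, 0 < a j := fun j =>
      mul_pos (pow_pos (by norm_num) j) (Real.toNNReal_pos.2 (hφ₂pos (Nf j)))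
    have haE : ∀ j, (a j : ℝ≥0∞) = (2 : ℝ≥0∞)⁻¹ ^ j * ENNReal.ofReal (φ₂ (2 * Nf j + 1)) := by
      intro j
      rw [show ENNReal.ofReal (φ₂ (2 * Nf j + 1)) = ((φ₂ (2 * Nf j + 1)).toNNReal : ℝ≥0∞) from rfl,
        ha]
      rw [ENNReal.coe_mul, ENNReal.coe_pow, ENNReal.coe_inv (two_ne_zero)]
      norm_num
    set x : ℤ → ℂ := fun k =>
      if h : ∃ j, k ∈ S (msh j) (Nf j) then ((a (Nat.find h) : ℝ) : ℂ) else 0 with hxdef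
    have hxval : ∀ j k, k ∈ S (msh j) (Nf j) → x k = ((a j : ℝ) : ℂ) := by
      intro j k hk
      have h : ∃ j, k ∈ S (msh j) (Nf j) := ⟨j, hk⟩
      have hfj : Nat.find h = j := huniq _ _ _ (Nat.find_spec h) hk
      simp only [hxdef]
      rw [dif_pos h, hfj]
    have hxnorm : ∀ j k, k ∈ S (msh j) (Nf j) → ‖x k‖₊ = a j := by
      intro j k hk
      rw [hxval j k hk, Complex.nnnorm_real]
      ext; simp [Real.nnnorm_of_nonneg (a j).coe_nonneg]
    have hr0 : (0:ℝ) < 1 / p₂ := by positivity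
    have hr1 : 1 / p₂ ≤ 1 := by rw [div_le_one hp₂0]; exact hp₂1
    have hub : wgMorreyNorm p₂ φ₂ x ≤ ENNReal.ofReal (Cd⁻¹ + Ci) * 2 := by
      apply norm_le_of
      intro m N γ hγ
      set M := (m + N).toNat + 1 with hM
      set cc : ℕ → ℕ := fun j =>
        (((S m N) ∩ S (msh j) (Nf j)).filter (fun _ => γ < a j)).card with hcc
      have hccN : ∀ j, cc j ≤ 2 * N + 1 := fun j =>
        ((Finset.card_filter_le _ _).trans
          (Finset.card_le_card Finset.inter_subset_left)).trans_eq (card_S m N)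
      have hccj : ∀ j, cc j ≤ 2 * Nf j + 1 := fun j =>
        ((Finset.card_filter_le _ _).trans
          (Finset.card_le_card Finset.inter_subset_right)).trans_eq (card_S _ _)
      have hsub2 : (S m N).filter (fun k => γ < ‖x k‖₊) ⊆
          (Finset.range M).biUnion
            (fun j => ((S m N) ∩ S (msh j) (Nf j)).filter (fun _ => γ < a j)) := by
        intro k hk
        rw [Finset.mem_filter] at hk
        obtain ⟨hkS, hkγ⟩ := hk
        have hex : ∃ j, k ∈ S (msh j) (Nf j) := by
          by_contra hne
          simp only [hxdef] at hkγ
          rw [dif_neg hne] at hkγ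
          simp only [nnnorm_zero] at hkγ
          exact absurd hkγ (by simp)
        obtain ⟨j, hkj⟩ := hex
        have hka : γ < a j := by rw [← hxnorm j k hkj]; exact hkγ
        have hk1 : (Pn j : ℤ) ≤ k := by
          have h5 := hkj; rw [hS, Finset.mem_Icc] at h5; exact h5.1
        have hk2 : k ≤ m + N := by
          rw [S, Finset.mem_Icc] at hkS; exact hkS.2
        have hjM : j < M := by
          have h3 : (j : ℤ) ≤ m + N := le_trans (by exact_mod_cast hjle j) (hk1.trans hk2)
          omega
        exact Finset.mem_biUnion.2 ⟨j, Finset.mem_range.2 hjM,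
          Finset.mem_filter.2 ⟨Finset.mem_inter.2 ⟨hkS, hkj⟩, hka⟩⟩
      have hcard : weakCard x m N γ ≤ ∑ j ∈ Finset.range M, cc j :=
        le_trans (Finset.card_le_card hsub2) Finset.card_biUnion_le
      have hstep1 : ((weakCard x m N γ : ℝ≥0∞) / (2 * (N : ℝ≥0∞) + 1)) ^ (1 / p₂) ≤
          ∑ j ∈ Finset.range M, ((cc j : ℝ≥0∞) / (2 * (N : ℝ≥0∞) + 1)) ^ (1 / p₂) := by
        calc ((weakCard x m N γ : ℝ≥0∞) / (2 * (N : ℝ≥0∞) + 1)) ^ (1 / p₂)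
            ≤ ((∑ j ∈ Finset.range M, (cc j : ℝ≥0∞)) / (2 * (N : ℝ≥0∞) + 1)) ^ (1 / p₂) := by
              gcongr
              exact_mod_cast hcard
          _ = (∑ j ∈ Finset.range M, (cc j : ℝ≥0∞) / (2 * (N : ℝ≥0∞) + 1)) ^ (1 / p₂) := by
              simp only [div_eq_mul_inv, Finset.sum_mul]
          _ ≤ _ := sum_rpow_le _ _ hr0 hr1
      calc wTerm p₂ φ₂ x m N γ
          = (ENNReal.ofReal (φ₂ (2 * N + 1)))⁻¹ * γ *
              ((weakCard x m N γ : ℝ≥0∞) / (2 * (N : ℝ≥0∞) + 1)) ^ (1 / p₂) := rfl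
        _ ≤ (ENNReal.ofReal (φ₂ (2 * N + 1)))⁻¹ * γ *
              ∑ j ∈ Finset.range M, ((cc j : ℝ≥0∞) / (2 * (N : ℝ≥0∞) + 1)) ^ (1 / p₂) :=
            mul_le_mul_right hstep1 _
        _ = ∑ j ∈ Finset.range M, (ENNReal.ofReal (φ₂ (2 * N + 1)))⁻¹ * γ *
              ((cc j : ℝ≥0∞) / (2 * (N : ℝ≥0∞) + 1)) ^ (1 / p₂) := Finset.mul_sum _ _ _
        _ ≤ ∑ j ∈ Finset.range M, ENNReal.ofReal (Cd⁻¹ + Ci) * (2 : ℝ≥0∞)⁻¹ ^ j := by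
            apply Finset.sum_le_sum
            intro j _
            by_cases hja : γ < a j
            · have hb := block hp₂1 hφ₂pos hCd hCi hdec hinc (Nf j) N hja.le (hccN j) (hccj j)
              refine hb.trans (le_of_eq ?_)
              rw [mul_assoc]
              congr 1
              rw [haE j, mul_assoc,
                ENNReal.mul_inv_cancel (by simp [hφ₂pos (Nf j)]) ENNReal.ofReal_ne_top, mul_one]
            · have hcc0 : cc j = 0 := by
                simp only [hcc]
                rw [Finset.filter_false_of_mem (fun _ _ => hja), Finset.card_empty]
              rw [hcc0, Nat.cast_zero, ENNReal.zero_div, ENNReal.zero_rpow_of_pos hr0, mul_zero]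
              exact zero_le
        _ ≤ ENNReal.ofReal (Cd⁻¹ + Ci) * 2 := by
            rw [← Finset.mul_sum]
            refine mul_le_mul_right ?_ _
            calc ∑ j ∈ Finset.range M, (2:ℝ≥0∞)⁻¹ ^ j ≤ ∑' j : ℕ, (2:ℝ≥0∞)⁻¹ ^ j :=
                ENNReal.sum_le_tsum _
              _ = 2 := by rw [ENNReal.tsum_geometric, ENNReal.one_sub_inv_two, inv_inv]
    have hfin2 : wgMorreyNorm p₂ φ₂ x < ⊤ :=
      lt_of_le_of_lt hub (ENNReal.mul_lt_top ENNReal.ofReal_lt_top (by norm_num))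
    have hfin1 := hsub x hfin2
    obtain ⟨n, hn⟩ := ENNReal.exists_nat_gt hfin1.ne
    set j := n + 1 with hj
    have hmem : ∀ k ∈ S (msh j) (Nf j), (a j / 2 : ℝ≥0) < ‖x k‖₊ := by
      intro k hk
      rw [hxnorm j k hk]
      exact NNReal.half_lt_self (hapos j).ne'
    have hwc : weakCard x (msh j) (Nf j) (a j / 2) = 2 * Nf j + 1 := by
      unfold weakCard
      rw [Finset.filter_true_of_mem hmem, card_S]
    have hAne : ENNReal.ofReal (φ₁ (2 * Nf j + 1)) ≠ 0 := by simp [hφ₁pos (Nf j)]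
    have hAnetop : ENNReal.ofReal (φ₁ (2 * Nf j + 1)) ≠ ⊤ := ENNReal.ofReal_ne_top
    have hterm : (2:ℝ≥0∞) ^ n ≤ wTerm p₁ φ₁ x (msh j) (Nf j) (a j / 2) := by
      rw [wTerm, hwc]
      have hone : ((2 * Nf j + 1 : ℕ) : ℝ≥0∞) / (2 * ((Nf j : ℕ) : ℝ≥0∞) + 1) = 1 := by
        rw [twoN1]
        exact ENNReal.div_self (Nat.cast_ne_zero.2 (by omega)) (ENNReal.natCast_ne_top _)
      rw [hone, ENNReal.one_rpow, mul_one]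
      have hcoe : ((a j / 2 : ℝ≥0) : ℝ≥0∞) = (a j : ℝ≥0∞) / 2 := by
        rw [ENNReal.coe_div (by norm_num : (2:ℝ≥0) ≠ 0)]; norm_num
      rw [hcoe, haE j]
      have e1 : ENNReal.ofReal ((4:ℝ)^j) = (4:ℝ≥0∞)^j := by
        rw [ENNReal.ofReal_pow (by norm_num), ENNReal.ofReal_ofNat]
      have hφle : (4:ℝ≥0∞)^j * ENNReal.ofReal (φ₁ (2 * Nf j + 1)) ≤
          ENNReal.ofReal (φ₂ (2 * Nf j + 1)) := by
        rw [← e1, ← ENNReal.ofReal_mul (by positivity)]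
        exact ENNReal.ofReal_le_ofReal (hNf j).le
      calc (2:ℝ≥0∞) ^ n
          = (ENNReal.ofReal (φ₁ (2 * Nf j + 1)))⁻¹ *
            ((2:ℝ≥0∞)⁻¹ ^ j * ((4:ℝ≥0∞)^j * ENNReal.ofReal (φ₁ (2 * Nf j + 1))) / 2) := by
            have hA2 : (ENNReal.ofReal (φ₁ (2 * Nf j + 1)))⁻¹ *
                ((2:ℝ≥0∞)⁻¹ ^ j * ((4:ℝ≥0∞)^j * ENNReal.ofReal (φ₁ (2 * Nf j + 1))) / 2)
                = ((2:ℝ≥0∞)⁻¹ ^ j * (4:ℝ≥0∞)^j) *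
                  ((ENNReal.ofReal (φ₁ (2 * Nf j + 1)))⁻¹ * ENNReal.ofReal (φ₁ (2 * Nf j + 1)))
                  * 2⁻¹ := by
              rw [div_eq_mul_inv]; ring
            have h24 : (2:ℝ≥0∞)⁻¹ * 4 = 2 := by
              rw [show (4:ℝ≥0∞) = 2 * 2 by norm_num, ← mul_assoc,
                ENNReal.inv_mul_cancel (by norm_num) (by norm_num), one_mul]
            rw [hA2, ENNReal.inv_mul_cancel hAne hAnetop, mul_one, ← mul_pow, h24, hj, pow_succ,
              mul_assoc, ENNReal.mul_inv_cancel (by norm_num) (by norm_num), mul_one]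
        _ ≤ (ENNReal.ofReal (φ₁ (2 * Nf j + 1)))⁻¹ *
            ((2:ℝ≥0∞)⁻¹ ^ j * ENNReal.ofReal (φ₂ (2 * Nf j + 1)) / 2) := by
            gcongr
    have hge : (2:ℝ≥0∞) ^ n ≤ wgMorreyNorm p₁ φ₁ x :=
      hterm.trans (wTerm_le_norm _ _ _ _ _ (div_pos (hapos j) two_pos))
    have h2n : ((n:ℕ) : ℝ≥0∞) < 2 ^ n := by exact_mod_cast Nat.lt_two_pow_self (n := n)
    exact lt_irrefl _ (lt_of_le_of_lt hge (hn.trans h2n))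
  obtain ⟨C', hC'pos, hC'⟩ := key
  refine ⟨C', hC'pos, fun x _ => ?_⟩
  apply norm_le_of
  intro m N γ hγ
  have hA : (ENNReal.ofReal (φ₁ (2 * N + 1)))⁻¹ ≤
      ENNReal.ofReal C' * (ENNReal.ofReal (φ₂ (2 * N + 1)))⁻¹ := by
    have hu0 : ENNReal.ofReal C' ≠ 0 := by simp [hC'pos]
    have hut : ENNReal.ofReal C' ≠ ⊤ := ENNReal.ofReal_ne_top
    have h1 : ENNReal.ofReal (φ₂ (2 * N + 1)) ≤
        ENNReal.ofReal C' * ENNReal.ofReal (φ₁ (2 * N + 1)) := by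
      rw [← ENNReal.ofReal_mul hC'pos.le]
      exact ENNReal.ofReal_le_ofReal (hC' N)
    have h3 : (ENNReal.ofReal (φ₁ (2 * N + 1)))⁻¹ =
        ENNReal.ofReal C' * (ENNReal.ofReal C' * ENNReal.ofReal (φ₁ (2 * N + 1)))⁻¹ := by
      rw [ENNReal.mul_inv (Or.inl hu0) (Or.inl hut), ← mul_assoc,
        ENNReal.mul_inv_cancel hu0 hut, one_mul]
    rw [h3]
    exact mul_le_mul_right (ENNReal.inv_le_inv' h1) _
  have hR : ((weakCard x m N γ : ℝ≥0∞) / (2 * (N : ℝ≥0∞) + 1)) ^ (1 / p₁) ≤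
      ((weakCard x m N γ : ℝ≥0∞) / (2 * (N : ℝ≥0∞) + 1)) ^ (1 / p₂) :=
    ENNReal.rpow_le_rpow_of_exponent_ge (ratio_le_one N (weakCard_le x m N γ))
      (one_div_le_one_div_of_le hp₁0 hp)
  calc wTerm p₁ φ₁ x m N γ
      ≤ (ENNReal.ofReal C' * (ENNReal.ofReal (φ₂ (2 * N + 1)))⁻¹) * γ *
        ((weakCard x m N γ : ℝ≥0∞) / (2 * (N : ℝ≥0∞) + 1)) ^ (1 / p₂) :=
        mul_le_mul' (mul_le_mul' hA le_rfl) hR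
    _ = ENNReal.ofReal C' * wTerm p₂ φ₂ x m N γ := by rw [wTerm]; ring
    _ ≤ ENNReal.ofReal C' * wgMorreyNorm p₂ φ₂ x :=
        mul_le_mul_right (wTerm_le_norm _ _ _ _ _ hγ) _
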